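/- For every real β > −2/e, the function f(x) = β·Real.exp x + x² has exactly one local minimizer x* on ℝ; this x* satisfies β·Real.exp x* + 2·x* = 0, and the second derivative is positive there: β·Real.exp x* + 2 > 0. -/

import Mathlib

open Real Set Filter

/-- For every `β > −2/e`, the function `f(x) = β·eˣ + x²` has exactly one
local minimizer `x*` on `ℝ`; this `x*` satisfies the critical-point equation
`β·e^{x*} + 2·x* = 0`, and the second derivative is positive there:
`β·e^{x*} + 2 > 0`. -/
theorem crucial_single_local_minimum (β : ℝ) (hβ : -2 / Real.exp 1 < β) :
    ∃ xs : ℝ,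
      IsLocalMin (fun x : ℝ => β * Real.exp x + x ^ 2) xs ∧
      (∀ y : ℝ, IsLocalMin (fun x : ℝ => β * Real.exp x + x ^ 2) y → y = xs) ∧
      β * Real.exp xs + 2 * xs = 0 ∧
      0 < β * Real.exp xs + 2 := by
  set f : ℝ → ℝ := fun x => β * Real.exp x + x ^ 2 with hfdef
  set g : ℝ → ℝ := fun x => β * Real.exp x + 2 * x with hgdef
  have hβe : 0 < β * Real.exp 1 + 2 := by
    have h := Real.exp_pos 1
    rw [div_lt_iff₀ h] at hβ
    linarith
  have hfd : ∀ x, HasDerivAt f (g x) x := by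
    intro x
    have h1 := (Real.hasDerivAt_exp x).const_mul β
    have h2 : HasDerivAt (fun x : ℝ => x ^ 2) (2 * x) x := by
      simpa using (hasDerivAt_pow 2 x)
    exact h1.add h2
  have hgd : ∀ x, HasDerivAt g (β * Real.exp x + 2) x := by
    intro x
    have h1 := (Real.hasDerivAt_exp x).const_mul β
    have h2 : HasDerivAt (fun x : ℝ => 2 * x) 2 x := by
      simpa using (hasDerivAt_id x).const_mul 2
    exact h1.add h2
  have hfc : Continuous f := by
    exact (continuous_const.mul Real.continuous_exp).add (continuous_pow 2)
  have hgc : Continuous g := by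
    exact (continuous_const.mul Real.continuous_exp).add (continuous_const.mul continuous_id)
  have hderiv : ∀ x, deriv f x = g x := fun x => (hfd x).deriv
  -- second derivative is positive for x ≤ 1
  have h2pos : ∀ x ≤ (1:ℝ), 0 < β * Real.exp x + 2 := by
    intro x hx
    rcases le_or_gt 0 β with h | h
    · nlinarith [Real.exp_pos x]
    · have h1 : Real.exp x ≤ Real.exp 1 := Real.exp_le_exp.mpr hx
      nlinarith
  -- g strictly increasing on Iic 1
  have hgmono : StrictMonoOn g (Iic 1) := by
    apply strictMonoOn_of_deriv_pos (convex_Iic 1) hgc.continuousOn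
    intro x hx
    rw [interior_Iic] at hx
    rw [(hgd x).deriv]
    exact h2pos x hx.le
  -- a point where g is negative
  set a : ℝ := -(|β| / 2 + 1) with hadef
  have ha1 : a ≤ 1 := by
    have := abs_nonneg β
    rw [hadef]; linarith
  have hga : g a < 0 := by
    have hea : Real.exp a ≤ 1 := by
      apply Real.exp_le_one_iff.mpr
      have := abs_nonneg β
      rw [hadef]; linarith
    have h1 : β * Real.exp a ≤ |β| := by
      calc β * Real.exp a ≤ |β| * Real.exp a := by
            exact mul_le_mul_of_nonneg_right (le_abs_self β) (Real.exp_pos a).le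
        _ ≤ |β| * 1 := mul_le_mul_of_nonneg_left hea (abs_nonneg β)
        _ = |β| := mul_one _
    have : g a = β * Real.exp a + 2 * a := rfl
    rw [this, hadef]; linarith
  have hg1 : 0 < g 1 := by
    have : g 1 = β * Real.exp 1 + 2 * 1 := rfl
    rw [this]; linarith
  -- IVT to get the critical point
  obtain ⟨xs, hxs_mem, hgxs⟩ : ∃ xs ∈ Icc a 1, g xs = 0 := by
    have := intermediate_value_Icc ha1 hgc.continuousOn
    have h0 : (0:ℝ) ∈ Icc (g a) (g 1) := ⟨hga.le, hg1.le⟩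
    obtain ⟨xs, hxs, h⟩ := this h0
    exact ⟨xs, hxs, h⟩
  have hxs1 : xs < 1 := by
    rcases lt_or_eq_of_le hxs_mem.2 with h | h
    · exact h
    · rw [h] at hgxs; rw [hgxs] at hg1; exact absurd hg1 (lt_irrefl 0)
  have hxsIic : xs ∈ Iic (1:ℝ) := hxs_mem.2
  -- antitone to the left of xs, monotone to the right (up to 1)
  have hanti : AntitoneOn f (Iic xs) := by
    apply antitoneOn_of_deriv_nonpos (convex_Iic xs) hfc.continuousOn (fun x _ => (hfd x).differentiableAt.differentiableWithinAt)
    intro x hx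
    rw [interior_Iic] at hx
    rw [hderiv x]
    have : g x < g xs := hgmono (Set.mem_Iic.mpr (le_of_lt (lt_of_lt_of_le hx hxsIic))) hxsIic hx
    rw [hgxs] at this; linarith
  have hmono : MonotoneOn f (Icc xs 1) := by
    apply monotoneOn_of_deriv_nonneg (convex_Icc xs 1) hfc.continuousOn (fun x _ => (hfd x).differentiableAt.differentiableWithinAt)
    intro x hx
    rw [interior_Icc] at hx
    rw [hderiv x]
    have : g xs < g x := hgmono hxsIic hx.2.le hx.1
    rw [hgxs] at this; linarith
  have hmin : IsLocalMin f xs := by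
    have hmem : Iic (1:ℝ) ∈ nhds xs := Iic_mem_nhds hxs1
    refine Filter.eventually_of_mem hmem (fun x hx => ?_)
    rcases le_total x xs with h | h
    · exact hanti (Set.mem_Iic.mpr h) (Set.mem_Iic.mpr le_rfl) h
    · exact hmono ⟨le_rfl, hxsIic⟩ ⟨h, hx⟩ h
  refine ⟨xs, hmin, ?_, hgxs, h2pos xs hxsIic⟩
  -- uniqueness
  intro y hy
  have hdy : deriv f y = 0 := hy.deriv_eq_zero
  have hgy : g y = 0 := by rw [← hderiv y]; exact hdy
  rcases le_or_gt y 1 with hy1 | hy1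
  · exact hgmono.injOn hy1 hxsIic (by rw [hgy, hgxs])
  · -- y > 1 : then β < 0 and it is a strict local max, contradiction
    exfalso
    have hey := Real.exp_pos y
    have hβy : β * Real.exp y = -2 * y := by
      have : g y = β * Real.exp y + 2 * y := rfl
      rw [this] at hgy; linarith
    have hβneg : β < 0 := by
      by_contra h
      push_neg at h
      nlinarith
    -- g strictly decreasing on Ici y
    have hganti : StrictAntiOn g (Ici y) := by
      apply strictAntiOn_of_deriv_neg (convex_Ici y) hgc.continuousOn
      intro x hx
      rw [interior_Ici] at hx
      rw [(hgd x).deriv]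
      have h1 : Real.exp y < Real.exp x := Real.exp_lt_exp.mpr hx
      nlinarith
    have hfanti : StrictAntiOn f (Ici y) := by
      apply strictAntiOn_of_deriv_neg (convex_Ici y) hfc.continuousOn
      intro x hx
      rw [interior_Ici] at hx
      rw [hderiv x]
      have : g x < g y := hganti self_mem_Ici (Set.mem_Ici.mpr (le_of_lt hx)) hx
      rw [hgy] at this; exact this
    have h1 : ∀ᶠ x in nhdsWithin y (Ioi y), f y ≤ f x :=
      (hy : ∀ᶠ x in nhds y, f y ≤ f x).filter_mono nhdsWithin_le_nhds
    have h2 : ∀ᶠ x in nhdsWithin y (Ioi y), x ∈ Ioi y := self_mem_nhdsWithin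
    obtain ⟨x, hfx, hxy⟩ := (h1.and h2).exists
    have : f x < f y := hfanti self_mem_Ici (Set.mem_Ici.mpr (le_of_lt (Set.mem_Ioi.mp hxy))) hxy
    linarith
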